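/- Under assumptions (C1)–(C3), for any y ∈ ℝ and any regime π = (π₁, π₂), the survival function of the potential outcome under π satisfies pr{Y*(π) ≥ y} = E[ Σ_{a₁∈{−1,1}} 1{π₁(H₁) = a₁} · E{ Σ_{a₂∈{−1,1}} 1{π₂(H₂) = a₂} · R(y; X₁, a₁, X₂, a₂) | X₁, A₁ = a₁ } ]. -/

import Mathlib

set_option linter.unusedSectionVars false
set_option maxHeartbeats 1000000
set_option linter.unusedVariables false

open MeasureTheory ProbabilityTheory Set Finset

noncomputable section

/-- The potential outcome under the regime `π = (π₁, π₂)`: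
`Y*(π) = Σ_{(a₁,a₂) ∈ {−1,1}²} Y*(a₁,a₂) 1{π₁(H₁)=a₁} 1{π₂(H₂*(a₁))=a₂}`,
where `H₁ = X₁` and `H₂*(a₁) = (X₁, a₁, X₂*(a₁))`. -/
def Ypi {Ω : Type*} {p₁ p₂ : ℕ}
    (X₁ : Ω → (Fin p₁ → ℝ)) (X₂star : ℝ → Ω → (Fin p₂ → ℝ))
    (Ystar : ℝ → ℝ → Ω → ℝ)
    (π₁ : (Fin p₁ → ℝ) → ℝ) (π₂ : (Fin p₁ → ℝ) × ℝ × (Fin p₂ → ℝ) → ℝ) (ω : Ω) : ℝ :=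
  ∑ a₁ ∈ ({-1, 1} : Finset ℝ), ∑ a₂ ∈ ({-1, 1} : Finset ℝ),
    (if π₁ (X₁ ω) = a₁ then (1:ℝ) else 0) *
      (if π₂ (X₁ ω, a₁, X₂star a₁ ω) = a₂ then (1:ℝ) else 0) * Ystar a₁ a₂ ω

/-- the collection `W` of all potential outcomes,
`W = {H₂*(a₁), Y*(a₁,a₂) : (a₁,a₂) ∈ {−1,1}²}` (with the common part `X₁` of the
`H₂*(a₁)` recorded through `X₂*(a₁)`), bundled as a single random element. -/
def Wfun {Ω : Type*} {p₂ : ℕ} (X₂star : ℝ → Ω → (Fin p₂ → ℝ))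
    (Ystar : ℝ → ℝ → Ω → ℝ) (ω : Ω) :
    ((Fin p₂ → ℝ) × (Fin p₂ → ℝ)) × (ℝ × ℝ × ℝ × ℝ) :=
  ((X₂star 1 ω, X₂star (-1) ω),
    (Ystar 1 1 ω, Ystar 1 (-1) ω, Ystar (-1) 1 ω, Ystar (-1) (-1) ω))


namespace Stmt0Aux

variable {Ω : Type*} {mΩ : MeasurableSpace Ω}

lemma integrable_of_bound {P : Measure Ω} [IsFiniteMeasure P] {f : Ω → ℝ}
    (hf : AEStronglyMeasurable f P) (M : ℝ)
    (hb : ∀ᵐ ω ∂P, |f ω| ≤ M) : Integrable f P :=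
  Integrable.mono' (integrable_const M) hf
    (by filter_upwards [hb] with ω h using by simpa [Real.norm_eq_abs] using h)

variable {P : Measure Ω} [IsProbabilityMeasure P]

lemma weighted_condExp {m : MeasurableSpace Ω} (hm : m ≤ mΩ) {f h : Ω → ℝ}
    (hf : Integrable f P) (hh : StronglyMeasurable[m] h) (M : ℝ)
    (hb : ∀ᵐ ω ∂P, |h ω| ≤ M) :
    ∫ ω, h ω * f ω ∂P = ∫ ω, h ω * (P[f|m]) ω ∂P := by
  have hint : Integrable (fun ω => h ω * f ω) P := by
    refine Integrable.mono' (hf.norm.const_mul M) (((hh.mono hm).aestronglyMeasurable).mul hf.1) ?_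
    filter_upwards [hb] with ω hω
    simpa [Real.norm_eq_abs, abs_mul] using mul_le_mul_of_nonneg_right hω (abs_nonneg (f ω))
  have h1 : P[fun ω => h ω * f ω|m] =ᵐ[P] fun ω => h ω * (P[f|m]) ω := by
    have := condExp_stronglyMeasurable_mul_of_bound hm hh hf M
      (by simpa [Real.norm_eq_abs] using hb)
    exact this
  rw [← integral_condExp hm (f := fun ω => h ω * f ω)]
  exact integral_congr_ae h1

lemma weighted_eq_of_setIntegral_eq {m : MeasurableSpace Ω} (hm : m ≤ mΩ) {f g h : Ω → ℝ}
    (hf : Integrable f P) (hg : Integrable g P)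
    (heq : ∀ C : Set Ω, MeasurableSet[m] C → ∫ ω in C, f ω ∂P = ∫ ω in C, g ω ∂P)
    (hh : StronglyMeasurable[m] h) (M : ℝ) (hb : ∀ᵐ ω ∂P, |h ω| ≤ M) :
    ∫ ω, h ω * f ω ∂P = ∫ ω, h ω * g ω ∂P := by
  have hcc : P[g|m] =ᵐ[P] P[f|m] := by
    refine ae_eq_condExp_of_forall_setIntegral_eq hm hf (fun s _ _ => ?_) (fun s hs _ => ?_) ?_
    · exact (show Integrable (P[g|m]) P from integrable_condExp).restrict
    · rw [setIntegral_condExp hm hg hs]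
      exact (heq s hs).symm
    · exact StronglyMeasurable.aestronglyMeasurable
        (show StronglyMeasurable[m] (P[g|m]) from stronglyMeasurable_condExp)
  rw [weighted_condExp hm hf hh M hb, weighted_condExp hm hg hh M hb]
  exact integral_congr_ae (by filter_upwards [hcc] with ω hω; rw [hω])

lemma integrable_ind {s : Set Ω} (hs : MeasurableSet[mΩ] s) :
    Integrable (s.indicator fun _ => (1:ℝ)) P :=
  (integrable_const (1:ℝ)).indicator hs

lemma condExp_ind_bound {m : MeasurableSpace Ω} (hm : m ≤ mΩ) {s : Set Ω}
    (hs : MeasurableSet[mΩ] s) :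
    ∀ᵐ ω ∂P, |(P⟦s|m⟧) ω| ≤ 1 := by
  have h0 : 0 ≤ᵐ[P] (P⟦s|m⟧) :=
    condExp_nonneg (Filter.Eventually.of_forall fun ω => Set.indicator_nonneg (fun _ _ => zero_le_one) ω)
  have hind : Integrable (s.indicator fun _ => (1:ℝ)) P := integrable_ind hs
  have h1 : (P⟦s|m⟧) ≤ᵐ[P] P[fun _ => (1:ℝ)|m] := by
    refine condExp_mono hind (integrable_const (1:ℝ))
      (Filter.Eventually.of_forall fun ω => ?_)
    by_cases h : ω ∈ s <;> simp [Set.indicator_apply, h]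
  have hc : P[fun _ => (1:ℝ)|m] = fun _ => (1:ℝ) := condExp_const hm 1
  rw [hc] at h1
  filter_upwards [h0, h1] with ω hω0 hω1
  have hω0' : (0:ℝ) ≤ (P⟦s|m⟧) ω := by simpa using hω0
  rw [abs_le]
  exact ⟨by linarith, hω1⟩

lemma condExp_indicator_inter {m : MeasurableSpace Ω} (hm : m ≤ mΩ) {u r : Set Ω}
    (hu : MeasurableSet[m] u) (hr : MeasurableSet[mΩ] r) :
    (P⟦u ∩ r|m⟧) =ᵐ[P] fun ω => u.indicator (fun _ => (1:ℝ)) ω * (P⟦r|m⟧) ω := by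
  have h1 : Set.indicator (u ∩ r) (fun _ => (1:ℝ)) =
      u.indicator (r.indicator (fun _ => (1:ℝ))) := by
    ext ω
    by_cases h1 : ω ∈ u <;> by_cases h2 : ω ∈ r <;>
      simp [Set.indicator_apply, Set.mem_inter_iff, h1, h2]
  show P[Set.indicator (u ∩ r) (fun _ => (1:ℝ))|m] =ᵐ[P] _
  rw [h1]
  have hind : Integrable (r.indicator fun _ => (1:ℝ)) P := integrable_ind hr
  have hci : P[u.indicator (r.indicator fun _ => (1:ℝ))|m]
      =ᵐ[P] u.indicator (P[r.indicator (fun _ => (1:ℝ))|m]) := condExp_indicator hind hu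
  refine hci.trans ?_
  refine Filter.Eventually.of_forall fun ω => ?_
  by_cases hω : ω ∈ u <;> simp [Set.indicator_apply, hω]

lemma abs_div_le' {x e ε : ℝ} (hx : |x| ≤ 1) (hε : 0 < ε) (he : ε < e) : |x / e| ≤ 1/ε := by
  rw [abs_div, abs_of_pos (lt_trans hε he)]
  exact div_le_div₀ zero_le_one hx hε he.le

lemma abs_div_le2 {x e ε M : ℝ} (hx : |x| ≤ M) (hε : 0 < ε) (he : ε < e) : |x / e| ≤ M/ε := by
  rw [abs_div, abs_of_pos (lt_trans hε he)]
  exact div_le_div₀ (le_trans (abs_nonneg x) hx) hx hε he.le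

section
variable [StandardBorelSpace Ω]

lemma condindep_weight {m : MeasurableSpace Ω} (hm : m ≤ mΩ)
    {β γ : Type*} [MeasurableSpace β] [MeasurableSpace γ]
    {A : Ω → β} {V : Ω → γ} (hA : Measurable[mΩ] A) (hV : Measurable[mΩ] V)
    (hCI : CondIndepFun m hm A V P) {s : Set β} {t : Set γ}
    (hs : MeasurableSet s) (ht : MeasurableSet t)
    {h : Ω → ℝ} (hh : StronglyMeasurable[m] h) (M : ℝ) (hb : ∀ᵐ ω ∂P, |h ω| ≤ M) :
    ∫ ω, h ω * ((A ⁻¹' s).indicator (fun _ => (1:ℝ)) ω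
        * (V ⁻¹' t).indicator (fun _ => (1:ℝ)) ω) ∂P
      = ∫ ω, (h ω * (P⟦A ⁻¹' s|m⟧) ω) * (V ⁻¹' t).indicator (fun _ => (1:ℝ)) ω ∂P := by
  have hsA : MeasurableSet[mΩ] (A ⁻¹' s) := hA hs
  have htV : MeasurableSet[mΩ] (V ⁻¹' t) := hV ht
  have key : (P⟦A ⁻¹' s ∩ V ⁻¹' t|m⟧)
      =ᵐ[P] fun ω => (P⟦A ⁻¹' s|m⟧) ω * (P⟦V ⁻¹' t|m⟧) ω := by
    have := (condIndepFun_iff_condExp_inter_preimage_eq_mul (μ := P) hA hV).mp hCI s t hs ht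
    exact this
  have hprod : ∀ ω, (A ⁻¹' s).indicator (fun _ => (1:ℝ)) ω
      * (V ⁻¹' t).indicator (fun _ => (1:ℝ)) ω
      = ((A ⁻¹' s) ∩ (V ⁻¹' t)).indicator (fun _ => (1:ℝ)) ω := by
    intro ω
    by_cases h1 : ω ∈ A ⁻¹' s <;> by_cases h2 : ω ∈ V ⁻¹' t <;>
      simp [Set.indicator_apply, Set.mem_inter_iff, h1, h2]
  have he_bd := condExp_ind_bound (P := P) hm hsA
  have hhe : StronglyMeasurable[m] (fun ω => h ω * (P⟦A ⁻¹' s|m⟧) ω) :=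
    hh.mul stronglyMeasurable_condExp
  have hhe_bd : ∀ᵐ ω ∂P, |h ω * (P⟦A ⁻¹' s|m⟧) ω| ≤ |M| := by
    filter_upwards [hb, he_bd] with ω h1 h2
    rw [abs_mul]
    calc |h ω| * |(P⟦A ⁻¹' s|m⟧) ω| ≤ |M| * 1 := by
          refine mul_le_mul (le_trans h1 (le_abs_self M)) h2 (abs_nonneg _) (abs_nonneg _)
      _ = |M| := mul_one _
  calc ∫ ω, h ω * ((A ⁻¹' s).indicator (fun _ => (1:ℝ)) ω
        * (V ⁻¹' t).indicator (fun _ => (1:ℝ)) ω) ∂P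
      = ∫ ω, h ω * ((A ⁻¹' s) ∩ (V ⁻¹' t)).indicator (fun _ => (1:ℝ)) ω ∂P := by
        congr 1; funext ω; rw [hprod ω]
    _ = ∫ ω, h ω * (P⟦(A ⁻¹' s) ∩ (V ⁻¹' t)|m⟧) ω ∂P :=
        weighted_condExp hm (integrable_ind (hsA.inter htV)) hh M hb
    _ = ∫ ω, h ω * ((P⟦A ⁻¹' s|m⟧) ω * (P⟦V ⁻¹' t|m⟧) ω) ∂P := by
        refine integral_congr_ae ?_
        filter_upwards [key] with ω hω
        rw [hω]
    _ = ∫ ω, (fun ω' => h ω' * (P⟦A ⁻¹' s|m⟧) ω') ω * (P⟦V ⁻¹' t|m⟧) ω ∂P := by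
        congr 1; funext ω; ring
    _ = ∫ ω, (fun ω' => h ω' * (P⟦A ⁻¹' s|m⟧) ω') ω
          * (V ⁻¹' t).indicator (fun _ => (1:ℝ)) ω ∂P :=
        (weighted_condExp hm (integrable_ind htV) hhe |M| hhe_bd).symm

lemma condIndepFun_prod {β γ δ : Type*} [MeasurableSpace β] [MeasurableSpace γ]
    [MeasurableSpace δ] {A : Ω → β} {V : Ω → γ} {X : Ω → δ}
    (hA : Measurable[mΩ] A) (hV : Measurable[mΩ] V) (hX : Measurable[mΩ] X)
    (hCI : CondIndepFun (MeasurableSpace.comap X inferInstance) hX.comap_le A V P) :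
    CondIndepFun (MeasurableSpace.comap X inferInstance) hX.comap_le A
      (fun ω => (X ω, V ω)) P := by
  set m : MeasurableSpace Ω := MeasurableSpace.comap X inferInstance with hm_def
  have hm : m ≤ mΩ := hX.comap_le
  have hmV : MeasurableSpace.comap V inferInstance ≤ mΩ := hV.comap_le
  rw [condIndepFun_iff_condIndep] at hCI ⊢
  have hcomap : (MeasurableSpace.comap (fun ω => (X ω, V ω)) inferInstance : MeasurableSpace Ω)
      = m ⊔ MeasurableSpace.comap V inferInstance := by
    show MeasurableSpace.comap (fun ω => (X ω, V ω))
      (MeasurableSpace.comap Prod.fst _ ⊔ MeasurableSpace.comap Prod.snd _) = _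
    rw [MeasurableSpace.comap_sup, MeasurableSpace.comap_comp, MeasurableSpace.comap_comp]
    rfl
  rw [hcomap]
  set p1 : Set (Set Ω) := {u | MeasurableSet[MeasurableSpace.comap A inferInstance] u} with hp1_def
  set p2 : Set (Set Ω) := {u | ∃ u₁ u₂, MeasurableSet[m] u₁
    ∧ MeasurableSet[MeasurableSpace.comap V inferInstance] u₂ ∧ u = u₁ ∩ u₂} with hp2_def
  have hgen1 : (MeasurableSpace.comap A inferInstance : MeasurableSpace Ω)
      = MeasurableSpace.generateFrom p1 :=
    (@MeasurableSpace.generateFrom_measurableSet Ω (MeasurableSpace.comap A inferInstance)).symm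
  have hgen2 : (m ⊔ MeasurableSpace.comap V inferInstance : MeasurableSpace Ω)
      = MeasurableSpace.generateFrom p2 := by
    refine le_antisymm (sup_le ?_ ?_) (MeasurableSpace.generateFrom_le ?_)
    · intro u hu
      exact MeasurableSpace.measurableSet_generateFrom ⟨u, Set.univ, hu, MeasurableSet.univ,
        (Set.inter_univ u).symm⟩
    · intro u hu
      exact MeasurableSpace.measurableSet_generateFrom ⟨Set.univ, u, MeasurableSet.univ, hu,
        (Set.univ_inter u).symm⟩
    · rintro u ⟨u₁, u₂, hu₁, hu₂, rfl⟩
      exact (MeasurableSet.inter (le_sup_left (a := m) u₁ hu₁)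
        ((le_sup_right (b := MeasurableSpace.comap V inferInstance) (a := m)) u₂ hu₂))
  refine CondIndepSets.condIndep hA.comap_le (sup_le hm hmV) ?_ ?_ hgen1 hgen2 ?_
  · intro u hu v hv _
    exact (show MeasurableSet[MeasurableSpace.comap A inferInstance] u from hu).inter hv
  · rintro u ⟨u₁, u₂, hu₁, hu₂, rfl⟩ v ⟨v₁, v₂, hv₁, hv₂, rfl⟩ _
    exact ⟨u₁ ∩ v₁, u₂ ∩ v₂, hu₁.inter hv₁, hu₂.inter hv₂, by ac_rfl⟩
  · -- CondIndepSets m hm p1 p2 P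
    refine (condIndepSets_iff (MeasurableSpace.comap X inferInstance) hX.comap_le p1 p2
      (fun u hu => hA.comap_le u hu)
      (by rintro u ⟨u₁, u₂, hu₁, hu₂, rfl⟩; exact (hm u₁ hu₁).inter (hmV u₂ hu₂)) P).mpr ?_
    rintro t1 t2 ht1 ⟨u₁, u₂, hu₁, hu₂, rfl⟩
    have hbase := (condIndep_iff m (MeasurableSpace.comap A inferInstance)
      (MeasurableSpace.comap V inferInstance) hm hA.comap_le hmV P).mp hCI
    have ht1' : MeasurableSet[mΩ] t1 := hA.comap_le t1 ht1
    have hu₂' : MeasurableSet[mΩ] u₂ := hmV u₂ hu₂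
    have h1 : t1 ∩ (u₁ ∩ u₂) = u₁ ∩ (t1 ∩ u₂) := by ac_rfl
    have h2 := condExp_indicator_inter (P := P) hm hu₁ (ht1'.inter hu₂')
    have h3 := hbase t1 u₂ ht1 hu₂
    have h4 := condExp_indicator_inter (P := P) hm hu₁ hu₂'
    rw [h1]
    refine h2.trans ?_
    have : (fun ω => u₁.indicator (fun _ => (1:ℝ)) ω * (P⟦t1 ∩ u₂|m⟧) ω)
        =ᵐ[P] fun ω => (P⟦t1|m⟧) ω * (u₁.indicator (fun _ => (1:ℝ)) ω * (P⟦u₂|m⟧) ω) := by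
      filter_upwards [h3] with ω hω
      simp only [hω, Pi.mul_apply]
      ring
    refine this.trans ?_
    filter_upwards [h4] with ω hω
    simp only [Pi.mul_apply, ← hω]
    rfl

end

end Stmt0Aux

open Stmt0Aux

/-- under (C1)–(C3), for any `y ∈ ℝ` and any regime `π = (π₁, π₂)`,
`pr{Y*(π) ≥ y} = E[ Σ_{a₁} 1{π₁(H₁)=a₁} E{ Σ_{a₂} 1{π₂(H₂)=a₂} R(y;X₁,a₁,X₂,a₂) ∣ X₁, A₁=a₁ } ]`,
where `ρ a₁` is a measurable version of the inner conditional expectation given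
`X₁, A₁ = a₁`. -/
theorem stmt0
    {Ω : Type*} [MeasurableSpace Ω] [StandardBorelSpace Ω]
    (P : Measure Ω) [IsProbabilityMeasure P]
    {p₁ p₂ : ℕ}
    (X₁ : Ω → (Fin p₁ → ℝ)) (A₁ : Ω → ℝ) (X₂ : Ω → (Fin p₂ → ℝ)) (A₂ : Ω → ℝ) (Y : Ω → ℝ)
    (X₂star : ℝ → Ω → (Fin p₂ → ℝ)) (Ystar : ℝ → ℝ → Ω → ℝ)
    (hX₁ : Measurable X₁) (hA₁ : Measurable A₁) (hX₂ : Measurable X₂)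
    (hA₂ : Measurable A₂) (hY : Measurable Y)
    (hX₂star : ∀ a₁, Measurable (X₂star a₁)) (hYstar : ∀ a₁ a₂, Measurable (Ystar a₁ a₂))
    (hA₁v : ∀ ω, A₁ ω = 1 ∨ A₁ ω = -1) (hA₂v : ∀ ω, A₂ ω = 1 ∨ A₂ ω = -1)
    -- (C1) consistency
    (hC1X : ∀ ω, X₂ ω = X₂star (A₁ ω) ω) (hC1Y : ∀ ω, Y ω = Ystar (A₁ ω) (A₂ ω) ω)
    -- (C2) sequential ignorability: `A_t ⫫ W ∣ H_t`, `t = 1, 2`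
    (hC2₁ : CondIndepFun (MeasurableSpace.comap X₁ inferInstance) hX₁.comap_le
      A₁ (Wfun X₂star Ystar) P)
    (hC2₂ : CondIndepFun
      (MeasurableSpace.comap (fun ω => (X₁ ω, A₁ ω, X₂ ω)) inferInstance)
      ((hX₁.prodMk (hA₁.prodMk hX₂)).comap_le)
      A₂ (Wfun X₂star Ystar) P)
    -- (C3) positivity
    (hC3 : ∃ ε > (0:ℝ), ∀ a ∈ ({-1, 1} : Set ℝ),
      (∀ᵐ ω ∂P,
        ε < (P[({ω' | A₁ ω' = a}).indicator (fun _ => (1:ℝ)) |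
              MeasurableSpace.comap X₁ inferInstance]) ω ∧
        (P[({ω' | A₁ ω' = a}).indicator (fun _ => (1:ℝ)) |
              MeasurableSpace.comap X₁ inferInstance]) ω < 1 - ε) ∧
      (∀ᵐ ω ∂P,
        ε < (P[({ω' | A₂ ω' = a}).indicator (fun _ => (1:ℝ)) |
              MeasurableSpace.comap (fun ω' => (X₁ ω', A₁ ω', X₂ ω')) inferInstance]) ω ∧
        (P[({ω' | A₂ ω' = a}).indicator (fun _ => (1:ℝ)) |
              MeasurableSpace.comap (fun ω' => (X₁ ω', A₁ ω', X₂ ω')) inferInstance]) ω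
          < 1 - ε))
    -- `R(y; x₁, a₁, x₂, a₂) = pr(Y ≥ y | X₁ = x₁, A₁ = a₁, X₂ = x₂, A₂ = a₂)`:
    -- a jointly measurable version of the conditional probability
    (R : ℝ → (Fin p₁ → ℝ) → ℝ → (Fin p₂ → ℝ) → ℝ → ℝ)
    (hR_meas : ∀ y a₁ a₂, Measurable (fun x : (Fin p₁ → ℝ) × (Fin p₂ → ℝ) => R y x.1 a₁ x.2 a₂))
    (hR_mem : ∀ y x₁ a₁ x₂ a₂, R y x₁ a₁ x₂ a₂ ∈ Icc (0:ℝ) 1)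
    (hR : ∀ (y a₁ a₂ : ℝ), ∀ B : Set ((Fin p₁ → ℝ) × (Fin p₂ → ℝ)), MeasurableSet B →
      (P {ω | y ≤ Y ω ∧ (X₁ ω, X₂ ω) ∈ B ∧ A₁ ω = a₁ ∧ A₂ ω = a₂}).toReal
        = ∫ ω in {ω | (X₁ ω, X₂ ω) ∈ B ∧ A₁ ω = a₁ ∧ A₂ ω = a₂},
            R y (X₁ ω) a₁ (X₂ ω) a₂ ∂P)
    (y : ℝ)
    (π₁ : (Fin p₁ → ℝ) → ℝ) (π₂ : (Fin p₁ → ℝ) × ℝ × (Fin p₂ → ℝ) → ℝ)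
    (hπ₁ : Measurable π₁) (hπ₂ : Measurable π₂)
    (hπ₁v : ∀ x, π₁ x = 1 ∨ π₁ x = -1) (hπ₂v : ∀ x, π₂ x = 1 ∨ π₂ x = -1)
    -- `ρ a₁` is a version of
    -- `x₁ ↦ E{ Σ_{a₂} 1{π₂(H₂)=a₂} R(y;X₁,a₁,X₂,a₂) ∣ X₁ = x₁, A₁ = a₁ }`
    (ρ : ℝ → (Fin p₁ → ℝ) → ℝ)
    (hρ_meas : ∀ a₁ ∈ ({-1, 1} : Set ℝ), Measurable (ρ a₁))
    (hρ : ∀ a₁ ∈ ({-1, 1} : Set ℝ), ∀ B : Set (Fin p₁ → ℝ), MeasurableSet B →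
      ∫ ω in {ω | X₁ ω ∈ B ∧ A₁ ω = a₁},
          (∑ a₂ ∈ ({-1, 1} : Finset ℝ),
            (if π₂ (X₁ ω, A₁ ω, X₂ ω) = a₂ then (1:ℝ) else 0) * R y (X₁ ω) a₁ (X₂ ω) a₂) ∂P
        = ∫ ω in {ω | X₁ ω ∈ B ∧ A₁ ω = a₁}, ρ a₁ (X₁ ω) ∂P) :
    (P {ω | y ≤ Ypi X₁ X₂star Ystar π₁ π₂ ω}).toReal
      = ∫ ω, (∑ a₁ ∈ ({-1, 1} : Finset ℝ),
          (if π₁ (X₁ ω) = a₁ then (1:ℝ) else 0) * ρ a₁ (X₁ ω)) ∂P := by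

  classical
  obtain ⟨ε, hεpos, hC3'⟩ := hC3
  have hne : (-1:ℝ) ≠ 1 := by norm_num
  have hne' : (1:ℝ) ≠ -1 := by norm_num
  have hW : Measurable (Wfun X₂star Ystar) :=
    ((hX₂star 1).prodMk (hX₂star (-1))).prodMk
      ((hYstar 1 1).prodMk ((hYstar 1 (-1)).prodMk
        ((hYstar (-1) 1).prodMk (hYstar (-1) (-1)))))
  have hT : Measurable (fun ω => (X₁ ω, A₁ ω, X₂ ω)) := hX₁.prodMk (hA₁.prodMk hX₂)
  have hYpi_meas : Measurable (Ypi X₁ X₂star Ystar π₁ π₂) := by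
    unfold Ypi
    refine Finset.measurable_sum _ fun a₁ _ => Finset.measurable_sum _ fun a₂ _ => ?_
    refine Measurable.mul (Measurable.mul ?_ ?_) (hYstar a₁ a₂)
    · exact Measurable.ite ((hπ₁.comp hX₁) (measurableSet_singleton a₁))
        measurable_const measurable_const
    · exact Measurable.ite
        ((hπ₂.comp (hX₁.prodMk (measurable_const.prodMk (hX₂star a₁))))
          (measurableSet_singleton a₂)) measurable_const measurable_const
  have hsetYpi : MeasurableSet {ω | y ≤ Ypi X₁ X₂star Ystar π₁ π₂ ω} :=
    measurableSet_le measurable_const hYpi_meas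
  have hpointwise : ∀ ω, Set.indicator {ω' | y ≤ Ypi X₁ X₂star Ystar π₁ π₂ ω'} (1 : Ω → ℝ) ω
      = ∑ a₁ ∈ ({-1, 1} : Finset ℝ), ∑ a₂ ∈ ({-1, 1} : Finset ℝ),
        (if π₁ (X₁ ω) = a₁ then (1:ℝ) else 0) *
          ((if π₂ (X₁ ω, a₁, X₂star a₁ ω) = a₂ then (1:ℝ) else 0) *
            (if y ≤ Ystar a₁ a₂ ω then (1:ℝ) else 0)) := by
    intro ω
    rw [Set.indicator_apply]
    rcases hπ₁v (X₁ ω) with h1 | h1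
    · rcases hπ₂v (X₁ ω, 1, X₂star 1 ω) with h2 | h2
      · simp [Ypi, Finset.sum_pair hne, h1, h2, Set.mem_setOf_eq, hne, hne']
      · simp [Ypi, Finset.sum_pair hne, h1, h2, Set.mem_setOf_eq, hne, hne']
    · rcases hπ₂v (X₁ ω, -1, X₂star (-1) ω) with h2 | h2
      · simp [Ypi, Finset.sum_pair hne, h1, h2, Set.mem_setOf_eq, hne, hne']
      · simp [Ypi, Finset.sum_pair hne, h1, h2, Set.mem_setOf_eq, hne, hne']
  have hterm_int : ∀ a₁ a₂ : ℝ, Integrable (fun ω =>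
      (if π₁ (X₁ ω) = a₁ then (1:ℝ) else 0) *
        ((if π₂ (X₁ ω, a₁, X₂star a₁ ω) = a₂ then (1:ℝ) else 0) *
          (if y ≤ Ystar a₁ a₂ ω then (1:ℝ) else 0))) P := by
    intro a₁ a₂
    refine integrable_of_bound ?_ 1 (Filter.Eventually.of_forall fun ω => ?_)
    · refine Measurable.aestronglyMeasurable ?_
      refine Measurable.mul (Measurable.ite ((hπ₁.comp hX₁) (measurableSet_singleton a₁))
        measurable_const measurable_const) (Measurable.mul ?_ ?_)
      · exact Measurable.ite
          ((hπ₂.comp (hX₁.prodMk (measurable_const.prodMk (hX₂star a₁))))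
            (measurableSet_singleton a₂)) measurable_const measurable_const
      · exact Measurable.ite (measurableSet_le measurable_const (hYstar a₁ a₂))
          measurable_const measurable_const
    · split_ifs <;> norm_num
  have hκmeas : ∀ a₁ : ℝ, Measurable (fun ω => ∑ a₂ ∈ ({-1, 1} : Finset ℝ),
      (if π₂ (X₁ ω, A₁ ω, X₂ ω) = a₂ then (1:ℝ) else 0) * R y (X₁ ω) a₁ (X₂ ω) a₂) := by
    intro a₁
    refine Finset.measurable_sum _ fun a₂ _ => Measurable.mul ?_ ?_
    · exact Measurable.ite ((hπ₂.comp hT) (measurableSet_singleton a₂))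
        measurable_const measurable_const
    · exact (hR_meas y a₁ a₂).comp (hX₁.prodMk hX₂)
  have hκbd : ∀ a₁ : ℝ, ∀ ω, 0 ≤ (∑ a₂ ∈ ({-1, 1} : Finset ℝ),
      (if π₂ (X₁ ω, A₁ ω, X₂ ω) = a₂ then (1:ℝ) else 0) * R y (X₁ ω) a₁ (X₂ ω) a₂)
      ∧ (∑ a₂ ∈ ({-1, 1} : Finset ℝ),
      (if π₂ (X₁ ω, A₁ ω, X₂ ω) = a₂ then (1:ℝ) else 0) * R y (X₁ ω) a₁ (X₂ ω) a₂) ≤ 1 := by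
    intro a₁ ω
    rcases hπ₂v (X₁ ω, A₁ ω, X₂ ω) with h | h <;>
    · rw [Finset.sum_pair hne]
      rcases hR_mem y (X₁ ω) a₁ (X₂ ω) 1 with ⟨g0, g1⟩
      rcases hR_mem y (X₁ ω) a₁ (X₂ ω) (-1) with ⟨g0', g1'⟩
      simp [h, hne, hne']
      constructor <;> linarith
  have hκint : ∀ a₁ : ℝ, Integrable (fun ω => ∑ a₂ ∈ ({-1, 1} : Finset ℝ),
      (if π₂ (X₁ ω, A₁ ω, X₂ ω) = a₂ then (1:ℝ) else 0) * R y (X₁ ω) a₁ (X₂ ω) a₂) P := by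
    intro a₁
    refine integrable_of_bound (hκmeas a₁).aestronglyMeasurable 1
      (Filter.Eventually.of_forall fun ω => ?_)
    rcases hκbd a₁ ω with ⟨h0, h1⟩
    rw [abs_le]; exact ⟨by linarith, h1⟩
  have hρbd : ∀ a₁ ∈ ({-1, 1} : Set ℝ), ∀ᵐ ω ∂P,
      0 ≤ ρ a₁ (X₁ ω) ∧ ρ a₁ (X₁ ω) ≤ 1 := by
    intro a₁ ha₁
    have hbd1 := (hC3' a₁ ha₁).1
    have hτ : Measurable (ρ a₁) := hρ_meas a₁ ha₁
    have hSeq : ∀ B : Set (Fin p₁ → ℝ), {ω | X₁ ω ∈ B ∧ A₁ ω = a₁}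
        = X₁ ⁻¹' B ∩ A₁ ⁻¹' {a₁} := by
      intro B; ext ω; simp [Set.mem_setOf_eq]
    have hSmeas : ∀ B : Set (Fin p₁ → ℝ), MeasurableSet B →
        MeasurableSet {ω | X₁ ω ∈ B ∧ A₁ ω = a₁} := by
      intro B hB; rw [hSeq]; exact (hX₁ hB).inter (hA₁ (measurableSet_singleton a₁))
    have hnull : ∀ B : Set (Fin p₁ → ℝ), MeasurableSet B →
        P {ω | X₁ ω ∈ B ∧ A₁ ω = a₁} = 0 → P (X₁ ⁻¹' B) = 0 := by
      intro B hB h0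
      have hmB : MeasurableSet[MeasurableSpace.comap X₁ inferInstance] (X₁ ⁻¹' B) :=
        ⟨B, hB, rfl⟩
      have hind : Integrable (({ω' | A₁ ω' = a₁}).indicator (fun _ => (1:ℝ))) P :=
        integrable_ind (hA₁ (measurableSet_singleton a₁))
      have hseteq2 : X₁ ⁻¹' B ∩ {ω' | A₁ ω' = a₁} = {ω | X₁ ω ∈ B ∧ A₁ ω = a₁} := by
        ext ω; simp [Set.mem_setOf_eq]
      have h1 : ∫ ω in X₁ ⁻¹' B, ({ω' | A₁ ω' = a₁}).indicator (fun _ => (1:ℝ)) ω ∂P = 0 := by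
        rw [setIntegral_indicator (show MeasurableSet {ω' | A₁ ω' = a₁} from
          hA₁ (measurableSet_singleton a₁)), hseteq2, setIntegral_const, measureReal_def, h0]
        simp
      have h2 : ∫ ω in X₁ ⁻¹' B, (P[({ω' | A₁ ω' = a₁}).indicator (fun _ => (1:ℝ)) |
            MeasurableSpace.comap X₁ inferInstance]) ω ∂P = 0 := by
        rw [setIntegral_condExp hX₁.comap_le hind hmB]; exact h1
      have h3 : ε * (P (X₁ ⁻¹' B)).toReal ≤ 0 := by
        rw [← h2]
        have hmono : ∫ ω in X₁ ⁻¹' B, ε ∂P ≤ ∫ ω in X₁ ⁻¹' B,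
            (P[({ω' | A₁ ω' = a₁}).indicator (fun _ => (1:ℝ)) |
              MeasurableSpace.comap X₁ inferInstance]) ω ∂P := by
          refine setIntegral_mono_ae_restrict (integrable_const ε).integrableOn
            integrable_condExp.integrableOn ?_
          exact ae_restrict_of_ae (hbd1.mono fun ω h => le_of_lt h.1)
        calc ε * (P (X₁ ⁻¹' B)).toReal = ∫ _ω in X₁ ⁻¹' B, ε ∂P := by
              rw [setIntegral_const, measureReal_def]; rw [smul_eq_mul]; ring
          _ ≤ _ := hmono
      have h4 : (P (X₁ ⁻¹' B)).toReal = 0 := by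
        have := ENNReal.toReal_nonneg (a := P (X₁ ⁻¹' B))
        nlinarith
      rcases (ENNReal.toReal_eq_zero_iff _).mp h4 with h | h
      · exact h
      · exact absurd h (measure_ne_top P _)
    have hzero : ∀ B : Set (Fin p₁ → ℝ), MeasurableSet B → ∀ c : ℝ, 0 < c →
        ((∀ x ∈ B, 1 + c ≤ ρ a₁ x) ∨ (∀ x ∈ B, ρ a₁ x ≤ -c)) →
        ∀ n : ℝ, (∀ x ∈ B, |ρ a₁ x| ≤ n) →
        P {ω | X₁ ω ∈ B ∧ A₁ ω = a₁} = 0 := by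
      intro B hB c hc hside n hn
      have hS := hSmeas B hB
      have hEq := hρ a₁ ha₁ B hB
      have hρS_int : IntegrableOn (fun ω => ρ a₁ (X₁ ω)) {ω | X₁ ω ∈ B ∧ A₁ ω = a₁} P := by
        refine integrable_of_bound (P := P.restrict _) (hτ.comp hX₁).aestronglyMeasurable n ?_
        filter_upwards [ae_restrict_mem hS] with ω hω using hn _ hω.1
      have hm0 : (0:ℝ) ≤ (P {ω | X₁ ω ∈ B ∧ A₁ ω = a₁}).toReal := ENNReal.toReal_nonneg
      have hκle : ∫ ω in {ω | X₁ ω ∈ B ∧ A₁ ω = a₁}, (∑ a₂ ∈ ({-1, 1} : Finset ℝ),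
          (if π₂ (X₁ ω, A₁ ω, X₂ ω) = a₂ then (1:ℝ) else 0) * R y (X₁ ω) a₁ (X₂ ω) a₂) ∂P
          ≤ (P {ω | X₁ ω ∈ B ∧ A₁ ω = a₁}).toReal := by
        calc _ ≤ ∫ _ω in {ω | X₁ ω ∈ B ∧ A₁ ω = a₁}, (1:ℝ) ∂P :=
              setIntegral_mono_ae_restrict (hκint a₁).integrableOn
                (integrable_const 1).integrableOn
                (ae_restrict_of_ae (Filter.Eventually.of_forall fun ω => (hκbd a₁ ω).2))
          _ = (P {ω | X₁ ω ∈ B ∧ A₁ ω = a₁}).toReal := by rw [setIntegral_const, measureReal_def, smul_eq_mul, mul_one]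
      have hκge : (0:ℝ) ≤ ∫ ω in {ω | X₁ ω ∈ B ∧ A₁ ω = a₁}, (∑ a₂ ∈ ({-1, 1} : Finset ℝ),
          (if π₂ (X₁ ω, A₁ ω, X₂ ω) = a₂ then (1:ℝ) else 0) * R y (X₁ ω) a₁ (X₂ ω) a₂) ∂P :=
        setIntegral_nonneg hS fun ω _ => (hκbd a₁ ω).1
      have hmeq : (P {ω | X₁ ω ∈ B ∧ A₁ ω = a₁}).toReal = 0 := by
        rcases hside with hpos | hneg
        · have hge : (1 + c) * (P {ω | X₁ ω ∈ B ∧ A₁ ω = a₁}).toReal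
              ≤ ∫ ω in {ω | X₁ ω ∈ B ∧ A₁ ω = a₁}, ρ a₁ (X₁ ω) ∂P := by
            calc (1 + c) * (P {ω | X₁ ω ∈ B ∧ A₁ ω = a₁}).toReal
                = ∫ _ω in {ω | X₁ ω ∈ B ∧ A₁ ω = a₁}, (1 + c) ∂P := by
                  rw [setIntegral_const, measureReal_def, smul_eq_mul]; ring
              _ ≤ _ := by
                  refine setIntegral_mono_ae_restrict (integrable_const _).integrableOn
                    hρS_int ?_
                  filter_upwards [ae_restrict_mem hS] with ω hω using hpos _ hω.1
          rw [← hEq] at hge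
          nlinarith
        · have hle : ∫ ω in {ω | X₁ ω ∈ B ∧ A₁ ω = a₁}, ρ a₁ (X₁ ω) ∂P
              ≤ (-c) * (P {ω | X₁ ω ∈ B ∧ A₁ ω = a₁}).toReal := by
            calc ∫ ω in {ω | X₁ ω ∈ B ∧ A₁ ω = a₁}, ρ a₁ (X₁ ω) ∂P
                ≤ ∫ _ω in {ω | X₁ ω ∈ B ∧ A₁ ω = a₁}, (-c) ∂P := by
                  refine setIntegral_mono_ae_restrict hρS_int
                    (integrable_const _).integrableOn ?_
                  filter_upwards [ae_restrict_mem hS] with ω hω using hneg _ hω.1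
              _ = (-c) * (P {ω | X₁ ω ∈ B ∧ A₁ ω = a₁}).toReal := by
                  rw [setIntegral_const, measureReal_def, smul_eq_mul]; ring
          rw [← hEq] at hle
          nlinarith
      rcases (ENNReal.toReal_eq_zero_iff _).mp hmeq with h | h
      · exact h
      · exact absurd h (measure_ne_top P _)
    have hbadpos : P (X₁ ⁻¹' {x | 1 < ρ a₁ x}) = 0 := by
      refine hnull _ (measurableSet_lt measurable_const hτ) ?_
      have hU : {x | 1 < ρ a₁ x} = ⋃ (k : ℕ), ⋃ (n : ℕ),
          {x | 1 + 1/((k:ℝ)+1) ≤ ρ a₁ x ∧ |ρ a₁ x| ≤ n} := by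
        ext x
        simp only [Set.mem_setOf_eq, Set.mem_iUnion]
        constructor
        · intro hx
          obtain ⟨k, hk⟩ := exists_nat_one_div_lt (show (0:ℝ) < ρ a₁ x - 1 by linarith)
          obtain ⟨n, hn⟩ := exists_nat_ge (|ρ a₁ x|)
          exact ⟨k, n, by linarith, hn⟩
        · rintro ⟨k, n, h1, _⟩
          have : (0:ℝ) < 1/((k:ℝ)+1) := by positivity
          linarith
      rw [hU]
      have : {ω | X₁ ω ∈ ⋃ (k : ℕ), ⋃ (n : ℕ),
          {x | 1 + 1/((k:ℝ)+1) ≤ ρ a₁ x ∧ |ρ a₁ x| ≤ n} ∧ A₁ ω = a₁}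
          = ⋃ (k : ℕ), ⋃ (n : ℕ), {ω | X₁ ω ∈
            {x | 1 + 1/((k:ℝ)+1) ≤ ρ a₁ x ∧ |ρ a₁ x| ≤ n} ∧ A₁ ω = a₁} := by
        ext ω; simp only [Set.mem_setOf_eq, Set.mem_iUnion]; tauto
      rw [this]
      refine measure_iUnion_null fun k => measure_iUnion_null fun n => ?_
      refine hzero _ ?_ (1/((k:ℝ)+1)) (by positivity) (Or.inl fun x hx => hx.1) n
        (fun x hx => hx.2)
      exact (measurableSet_le measurable_const hτ).inter
        (measurableSet_le hτ.abs measurable_const)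
    have hbadneg : P (X₁ ⁻¹' {x | ρ a₁ x < 0}) = 0 := by
      refine hnull _ (measurableSet_lt hτ measurable_const) ?_
      have hU : {x | ρ a₁ x < 0} = ⋃ (k : ℕ), ⋃ (n : ℕ),
          {x | ρ a₁ x ≤ -(1/((k:ℝ)+1)) ∧ |ρ a₁ x| ≤ n} := by
        ext x
        simp only [Set.mem_setOf_eq, Set.mem_iUnion]
        constructor
        · intro hx
          obtain ⟨k, hk⟩ := exists_nat_one_div_lt (show (0:ℝ) < -ρ a₁ x by linarith)
          obtain ⟨n, hn⟩ := exists_nat_ge (|ρ a₁ x|)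
          exact ⟨k, n, by linarith, hn⟩
        · rintro ⟨k, n, h1, _⟩
          have : (0:ℝ) < 1/((k:ℝ)+1) := by positivity
          linarith
      rw [hU]
      have : {ω | X₁ ω ∈ ⋃ (k : ℕ), ⋃ (n : ℕ),
          {x | ρ a₁ x ≤ -(1/((k:ℝ)+1)) ∧ |ρ a₁ x| ≤ n} ∧ A₁ ω = a₁}
          = ⋃ (k : ℕ), ⋃ (n : ℕ), {ω | X₁ ω ∈
            {x | ρ a₁ x ≤ -(1/((k:ℝ)+1)) ∧ |ρ a₁ x| ≤ n} ∧ A₁ ω = a₁} := by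
        ext ω; simp only [Set.mem_setOf_eq, Set.mem_iUnion]; tauto
      rw [this]
      refine measure_iUnion_null fun k => measure_iUnion_null fun n => ?_
      refine hzero _ ?_ (1/((k:ℝ)+1)) (by positivity) (Or.inr fun x hx => hx.1) n
        (fun x hx => hx.2)
      exact (measurableSet_le hτ measurable_const).inter
        (measurableSet_le hτ.abs measurable_const)
    rw [MeasureTheory.ae_iff]
    refine measure_mono_null ?_ (measure_union_null hbadneg hbadpos)
    intro ω hω
    simp only [Set.mem_setOf_eq, not_and_or, not_le] at hω
    rcases hω with h | h
    · exact Or.inl h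
    · exact Or.inr h
  have main : ∀ a₁ ∈ ({-1, 1} : Finset ℝ),
      (∑ a₂ ∈ ({-1, 1} : Finset ℝ), ∫ ω,
        (if π₁ (X₁ ω) = a₁ then (1:ℝ) else 0) *
          ((if π₂ (X₁ ω, a₁, X₂star a₁ ω) = a₂ then (1:ℝ) else 0) *
            (if y ≤ Ystar a₁ a₂ ω then (1:ℝ) else 0)) ∂P)
      = ∫ ω, (if π₁ (X₁ ω) = a₁ then (1:ℝ) else 0) * ρ a₁ (X₁ ω) ∂P := by
    intro a₁ ha₁f
    have ha₁ : a₁ ∈ ({-1, 1} : Set ℝ) := by simpa using (by simpa using ha₁f : a₁ = -1 ∨ a₁ = 1)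
    have ha₁v : a₁ = -1 ∨ a₁ = 1 := by simpa using ha₁f
    have hεinv : (0:ℝ) < 1/ε := by positivity
    -- first-stage conditional probability
    set E1 : Ω → ℝ := P[(A₁ ⁻¹' {a₁}).indicator (fun _ => (1:ℝ)) |
      MeasurableSpace.comap X₁ inferInstance] with hE1def
    have hE1bd : ∀ᵐ ω ∂P, ε < E1 ω ∧ E1 ω < 1 - ε := (hC3' a₁ ha₁).1
    have hE1sm : StronglyMeasurable[MeasurableSpace.comap X₁ inferInstance] E1 :=
      stronglyMeasurable_condExp
    -- measurability on comap X₁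
    have hX₁m : Measurable[MeasurableSpace.comap X₁ inferInstance] X₁ := fun s hs => ⟨s, hs, rfl⟩
    have hI1m : Measurable[MeasurableSpace.comap X₁ inferInstance]
        (fun ω => if π₁ (X₁ ω) = a₁ then (1:ℝ) else 0) := by
      refine Measurable.ite ?_ measurable_const measurable_const
      exact ⟨π₁ ⁻¹' {a₁}, hπ₁ (measurableSet_singleton a₁), rfl⟩
    have hH1sm : StronglyMeasurable[MeasurableSpace.comap X₁ inferInstance]
        (fun ω => (if π₁ (X₁ ω) = a₁ then (1:ℝ) else 0) / E1 ω) :=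
      (hI1m.div hE1sm.measurable).stronglyMeasurable
    have hH1bd : ∀ᵐ ω ∂P, |(if π₁ (X₁ ω) = a₁ then (1:ℝ) else 0) / E1 ω| ≤ 1/ε := by
      filter_upwards [hE1bd] with ω hω
      exact abs_div_le' (by split_ifs <;> norm_num) hεpos hω.1
    -- measurability on comap (X₁, A₁, X₂)
    have hTm : Measurable[MeasurableSpace.comap (fun ω => (X₁ ω, A₁ ω, X₂ ω)) inferInstance]
        (fun ω => (X₁ ω, A₁ ω, X₂ ω)) := fun s hs => ⟨s, hs, rfl⟩
    have hm₁₂ : (MeasurableSpace.comap X₁ inferInstance : MeasurableSpace Ω)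
        ≤ MeasurableSpace.comap (fun ω => (X₁ ω, A₁ ω, X₂ ω)) inferInstance := by
      rintro s ⟨u, hu, rfl⟩
      exact ⟨Prod.fst ⁻¹' u, measurable_fst hu, rfl⟩
    have hJ1m : Measurable[MeasurableSpace.comap (fun ω => (X₁ ω, A₁ ω, X₂ ω)) inferInstance]
        (fun ω => if A₁ ω = a₁ then (1:ℝ) else 0) := by
      refine Measurable.ite ?_ measurable_const measurable_const
      exact ⟨(fun p : (Fin p₁ → ℝ) × ℝ × (Fin p₂ → ℝ) => p.2.1) ⁻¹' {a₁},
        (measurable_fst.comp measurable_snd) (measurableSet_singleton a₁), rfl⟩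
    have hrm : ∀ a₂ : ℝ, Measurable[MeasurableSpace.comap
        (fun ω => (X₁ ω, A₁ ω, X₂ ω)) inferInstance]
        (fun ω => R y (X₁ ω) a₁ (X₂ ω) a₂) := by
      intro a₂
      exact ((hR_meas y a₁ a₂).comp
        (measurable_fst.prodMk (measurable_snd.comp measurable_snd))).comp hTm
    have hI2'm : ∀ a₂ : ℝ, Measurable[MeasurableSpace.comap
        (fun ω => (X₁ ω, A₁ ω, X₂ ω)) inferInstance]
        (fun ω => if π₂ (X₁ ω, A₁ ω, X₂ ω) = a₂ then (1:ℝ) else 0) := by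
      intro a₂
      refine Measurable.ite ?_ measurable_const measurable_const
      exact ⟨π₂ ⁻¹' {a₂}, hπ₂ (measurableSet_singleton a₂), rfl⟩
    -- the conditional independence for stage 1, with X₁ adjoined
    have hCI1 : CondIndepFun (MeasurableSpace.comap X₁ inferInstance) hX₁.comap_le A₁
        (fun ω => (X₁ ω, Wfun X₂star Ystar ω)) P :=
      condIndepFun_prod hA₁ hW hX₁ hC2₁
    -- per-a₂ chain
    have chain : ∀ a₂ ∈ ({-1, 1} : Finset ℝ),
        ∫ ω, (if π₁ (X₁ ω) = a₁ then (1:ℝ) else 0) *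
          ((if π₂ (X₁ ω, a₁, X₂star a₁ ω) = a₂ then (1:ℝ) else 0) *
            (if y ≤ Ystar a₁ a₂ ω then (1:ℝ) else 0)) ∂P
        = ∫ ω, ((if π₁ (X₁ ω) = a₁ then (1:ℝ) else 0) / E1 ω) *
            ((if A₁ ω = a₁ then (1:ℝ) else 0) *
              ((if π₂ (X₁ ω, A₁ ω, X₂ ω) = a₂ then (1:ℝ) else 0) *
                R y (X₁ ω) a₁ (X₂ ω) a₂)) ∂P := by
      intro a₂ ha₂f
      have ha₂ : a₂ ∈ ({-1, 1} : Set ℝ) := by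
        simpa using (by simpa using ha₂f : a₂ = -1 ∨ a₂ = 1)
      have ha₂v : a₂ = -1 ∨ a₂ = 1 := by simpa using ha₂f
      set E2 : Ω → ℝ := P[(A₂ ⁻¹' {a₂}).indicator (fun _ => (1:ℝ)) |
        MeasurableSpace.comap (fun ω => (X₁ ω, A₁ ω, X₂ ω)) inferInstance] with hE2def
      have hE2bd : ∀ᵐ ω ∂P, ε < E2 ω ∧ E2 ω < 1 - ε := (hC3' a₂ ha₂).2
      have hE2sm : StronglyMeasurable[MeasurableSpace.comap
          (fun ω => (X₁ ω, A₁ ω, X₂ ω)) inferInstance] E2 := stronglyMeasurable_condExp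
      -- selectors on the W space
      set sel2 : ((Fin p₂ → ℝ) × (Fin p₂ → ℝ)) × (ℝ × ℝ × ℝ × ℝ) → (Fin p₂ → ℝ) :=
        fun w => if a₁ = 1 then w.1.1 else w.1.2 with hsel2def
      set selY : ((Fin p₂ → ℝ) × (Fin p₂ → ℝ)) × (ℝ × ℝ × ℝ × ℝ) → ℝ :=
        fun w => if a₁ = 1 then (if a₂ = 1 then w.2.1 else w.2.2.1)
          else (if a₂ = 1 then w.2.2.2.1 else w.2.2.2.2) with hselYdef
      have hsel2m : Measurable sel2 := by
        rcases ha₁v with h | h <;> subst h <;> simp [hsel2def, hne] <;> fun_prop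
      have hselYm : Measurable selY := by
        rcases ha₁v with h | h <;> rcases ha₂v with h' | h' <;> subst h <;> subst h' <;>
          simp [hselYdef, hne] <;> fun_prop
      have hsel2W : ∀ ω, sel2 (Wfun X₂star Ystar ω) = X₂star a₁ ω := by
        intro ω
        rcases ha₁v with h | h <;> subst h <;> simp [hsel2def, Wfun, hne]
      have hselYW : ∀ ω, selY (Wfun X₂star Ystar ω) = Ystar a₁ a₂ ω := by
        intro ω
        rcases ha₁v with h | h <;> rcases ha₂v with h' | h' <;> subst h <;> subst h' <;>
          simp [hselYdef, Wfun, hne]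
      set Tset : Set ((Fin p₁ → ℝ) × ((Fin p₂ → ℝ) × (Fin p₂ → ℝ)) × (ℝ × ℝ × ℝ × ℝ)) :=
        {q | π₂ (q.1, a₁, sel2 q.2) = a₂ ∧ y ≤ selY q.2} with hTsetdef
      have hTsetm : MeasurableSet Tset := by
        refine MeasurableSet.inter ?_ ?_
        · exact (hπ₂.comp (measurable_fst.prodMk
            (measurable_const.prodMk (hsel2m.comp measurable_snd))))
            (measurableSet_singleton a₂)
        · exact measurableSet_le measurable_const (hselYm.comp measurable_snd)
      set TY : Set (((Fin p₂ → ℝ) × (Fin p₂ → ℝ)) × (ℝ × ℝ × ℝ × ℝ)) :=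
        {w | y ≤ selY w} with hTYdef
      have hTYm : MeasurableSet TY := measurableSet_le measurable_const hselYm
      -- pointwise indicator identities
      have hVind : ∀ ω, (if π₂ (X₁ ω, a₁, X₂star a₁ ω) = a₂ then (1:ℝ) else 0) *
          (if y ≤ Ystar a₁ a₂ ω then (1:ℝ) else 0)
          = ((fun ω' => (X₁ ω', Wfun X₂star Ystar ω')) ⁻¹' Tset).indicator
              (fun _ => (1:ℝ)) ω := by
        intro ω
        by_cases h2 : π₂ (X₁ ω, a₁, X₂star a₁ ω) = a₂ <;>
          by_cases h3 : y ≤ Ystar a₁ a₂ ω <;>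
          simp [Set.indicator_apply, Set.mem_preimage, hTsetdef, Set.mem_setOf_eq,
            hsel2W, hselYW, h2, h3]
      have hWTY : ∀ ω, (if y ≤ Ystar a₁ a₂ ω then (1:ℝ) else 0)
          = ((Wfun X₂star Ystar) ⁻¹' TY).indicator (fun _ => (1:ℝ)) ω := by
        intro ω
        by_cases h3 : y ≤ Ystar a₁ a₂ ω <;>
          simp [Set.indicator_apply, Set.mem_preimage, hTYdef, Set.mem_setOf_eq, hselYW, h3]
      have hJ1ind : ∀ ω, (if A₁ ω = a₁ then (1:ℝ) else 0)
          = (A₁ ⁻¹' {a₁}).indicator (fun _ => (1:ℝ)) ω := by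
        intro ω; by_cases h : A₁ ω = a₁ <;> simp [Set.indicator_apply, h]
      have hJ2ind : ∀ ω, (if A₂ ω = a₂ then (1:ℝ) else 0)
          = (A₂ ⁻¹' {a₂}).indicator (fun _ => (1:ℝ)) ω := by
        intro ω; by_cases h : A₂ ω = a₂ <;> simp [Set.indicator_apply, h]
      have hE1ne : ∀ᵐ ω ∂P, E1 ω ≠ 0 := hE1bd.mono fun ω h => ne_of_gt (hεpos.trans h.1)
      have hE2ne : ∀ᵐ ω ∂P, E2 ω ≠ 0 := hE2bd.mono fun ω h => ne_of_gt (hεpos.trans h.1)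
      have hVmeas : Measurable (fun ω => (X₁ ω, Wfun X₂star Ystar ω)) := hX₁.prodMk hW
      -- second-stage weight
      have hg2m : Measurable[MeasurableSpace.comap (fun ω => (X₁ ω, A₁ ω, X₂ ω)) inferInstance]
          (fun ω => ((if π₁ (X₁ ω) = a₁ then (1:ℝ) else 0) / E1 ω) *
            (if A₁ ω = a₁ then (1:ℝ) else 0) *
            (if π₂ (X₁ ω, A₁ ω, X₂ ω) = a₂ then (1:ℝ) else 0) / E2 ω) :=
        ((((hI1m.div hE1sm.measurable).mono hm₁₂ le_rfl).mul hJ1m).mul (hI2'm a₂)).div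
          hE2sm.measurable
      have hg2bd : ∀ᵐ ω ∂P, |((if π₁ (X₁ ω) = a₁ then (1:ℝ) else 0) / E1 ω) *
            (if A₁ ω = a₁ then (1:ℝ) else 0) *
            (if π₂ (X₁ ω, A₁ ω, X₂ ω) = a₂ then (1:ℝ) else 0) / E2 ω| ≤ (1/ε)/ε := by
        filter_upwards [hH1bd, hE2bd] with ω h1 h2
        refine abs_div_le2 ?_ hεpos h2.1
        calc |(if π₁ (X₁ ω) = a₁ then (1:ℝ) else 0) / E1 ω *
              (if A₁ ω = a₁ then (1:ℝ) else 0) *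
              (if π₂ (X₁ ω, A₁ ω, X₂ ω) = a₂ then (1:ℝ) else 0)|
            ≤ |(if π₁ (X₁ ω) = a₁ then (1:ℝ) else 0) / E1 ω| * 1 * 1 := by
              rw [abs_mul, abs_mul]
              refine mul_le_mul (mul_le_mul le_rfl ?_ (abs_nonneg _) (abs_nonneg _)) ?_
                (abs_nonneg _) (by positivity)
              · split_ifs <;> norm_num
              · split_ifs <;> norm_num
          _ ≤ 1/ε := by rw [mul_one, mul_one]; exact h1
      have hh3m : Measurable[MeasurableSpace.comap (fun ω => (X₁ ω, A₁ ω, X₂ ω)) inferInstance]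
          (fun ω => ((if π₁ (X₁ ω) = a₁ then (1:ℝ) else 0) / E1 ω) *
            (if π₂ (X₁ ω, A₁ ω, X₂ ω) = a₂ then (1:ℝ) else 0) / E2 ω) :=
        (((hI1m.div hE1sm.measurable).mono hm₁₂ le_rfl).mul (hI2'm a₂)).div hE2sm.measurable
      have hh3bd : ∀ᵐ ω ∂P, |((if π₁ (X₁ ω) = a₁ then (1:ℝ) else 0) / E1 ω) *
            (if π₂ (X₁ ω, A₁ ω, X₂ ω) = a₂ then (1:ℝ) else 0) / E2 ω| ≤ (1/ε)/ε := by
        filter_upwards [hH1bd, hE2bd] with ω h1 h2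
        refine abs_div_le2 ?_ hεpos h2.1
        calc |(if π₁ (X₁ ω) = a₁ then (1:ℝ) else 0) / E1 ω *
              (if π₂ (X₁ ω, A₁ ω, X₂ ω) = a₂ then (1:ℝ) else 0)|
            ≤ |(if π₁ (X₁ ω) = a₁ then (1:ℝ) else 0) / E1 ω| * 1 := by
              rw [abs_mul]
              refine mul_le_mul le_rfl ?_ (abs_nonneg _) (abs_nonneg _)
              split_ifs <;> norm_num
          _ ≤ 1/ε := by rw [mul_one]; exact h1
      have hh4m : Measurable[MeasurableSpace.comap (fun ω => (X₁ ω, A₁ ω, X₂ ω)) inferInstance]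
          (fun ω => ((if π₁ (X₁ ω) = a₁ then (1:ℝ) else 0) / E1 ω) *
            ((if A₁ ω = a₁ then (1:ℝ) else 0) *
              ((if π₂ (X₁ ω, A₁ ω, X₂ ω) = a₂ then (1:ℝ) else 0) *
                R y (X₁ ω) a₁ (X₂ ω) a₂)) / E2 ω) :=
        (((hI1m.div hE1sm.measurable).mono hm₁₂ le_rfl).mul
          (hJ1m.mul ((hI2'm a₂).mul (hrm a₂)))).div hE2sm.measurable
      have hh4bd : ∀ᵐ ω ∂P, |((if π₁ (X₁ ω) = a₁ then (1:ℝ) else 0) / E1 ω) *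
            ((if A₁ ω = a₁ then (1:ℝ) else 0) *
              ((if π₂ (X₁ ω, A₁ ω, X₂ ω) = a₂ then (1:ℝ) else 0) *
                R y (X₁ ω) a₁ (X₂ ω) a₂)) / E2 ω| ≤ (1/ε)/ε := by
        filter_upwards [hH1bd, hE2bd] with ω h1 h2
        refine abs_div_le2 ?_ hεpos h2.1
        have hr01 := hR_mem y (X₁ ω) a₁ (X₂ ω) a₂
        calc |(if π₁ (X₁ ω) = a₁ then (1:ℝ) else 0) / E1 ω *
              ((if A₁ ω = a₁ then (1:ℝ) else 0) *
                ((if π₂ (X₁ ω, A₁ ω, X₂ ω) = a₂ then (1:ℝ) else 0) *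
                  R y (X₁ ω) a₁ (X₂ ω) a₂))|
            ≤ |(if π₁ (X₁ ω) = a₁ then (1:ℝ) else 0) / E1 ω| * 1 := by
              rw [abs_mul]
              refine mul_le_mul le_rfl ?_ (abs_nonneg _) (abs_nonneg _)
              rw [abs_mul, abs_mul]
              have h01 : |R y (X₁ ω) a₁ (X₂ ω) a₂| ≤ 1 := by
                rw [abs_le]; exact ⟨by linarith [hr01.1], hr01.2⟩
              have hb1 : |(if A₁ ω = a₁ then (1:ℝ) else 0)| ≤ 1 := by split_ifs <;> norm_num
              have hb2 : |(if π₂ (X₁ ω, A₁ ω, X₂ ω) = a₂ then (1:ℝ) else 0)| ≤ 1 := by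
                split_ifs <;> norm_num
              calc |(if A₁ ω = a₁ then (1:ℝ) else 0)| *
                    (|(if π₂ (X₁ ω, A₁ ω, X₂ ω) = a₂ then (1:ℝ) else 0)| *
                      |R y (X₁ ω) a₁ (X₂ ω) a₂|)
                  ≤ 1 * (1 * 1) := by
                    refine mul_le_mul hb1 (mul_le_mul hb2 h01 (abs_nonneg _) zero_le_one)
                      (by positivity) zero_le_one
                _ = 1 := by ring
          _ ≤ 1/ε := by rw [mul_one]; exact h1
      -- hR as set-integral equality over comap(X₁,A₁,X₂) sets
      have hf_int : Integrable (fun ω => (if A₁ ω = a₁ then (1:ℝ) else 0) *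
          ((if A₂ ω = a₂ then (1:ℝ) else 0) * (if y ≤ Y ω then (1:ℝ) else 0))) P := by
        refine integrable_of_bound ?_ 1 (Filter.Eventually.of_forall fun ω => ?_)
        · refine Measurable.aestronglyMeasurable ?_
          refine (Measurable.ite (hA₁ (measurableSet_singleton a₁)) measurable_const
            measurable_const).mul (Measurable.mul ?_ ?_)
          · exact Measurable.ite (hA₂ (measurableSet_singleton a₂)) measurable_const
              measurable_const
          · exact Measurable.ite (measurableSet_le measurable_const hY) measurable_const
              measurable_const
        · split_ifs <;> norm_num
      have hg_int : Integrable (fun ω => (if A₁ ω = a₁ then (1:ℝ) else 0) *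
          ((if A₂ ω = a₂ then (1:ℝ) else 0) * R y (X₁ ω) a₁ (X₂ ω) a₂)) P := by
        refine integrable_of_bound ?_ 1 (Filter.Eventually.of_forall fun ω => ?_)
        · refine Measurable.aestronglyMeasurable ?_
          refine (Measurable.ite (hA₁ (measurableSet_singleton a₁)) measurable_const
            measurable_const).mul (Measurable.mul ?_ ?_)
          · exact Measurable.ite (hA₂ (measurableSet_singleton a₂)) measurable_const
              measurable_const
          · exact (hR_meas y a₁ a₂).comp (hX₁.prodMk hX₂)
        · have hr01 := hR_mem y (X₁ ω) a₁ (X₂ ω) a₂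
          split_ifs <;> simp <;> rw [abs_le] <;> exact ⟨by linarith [hr01.1], hr01.2⟩
      have hsets : ∀ C : Set Ω,
          MeasurableSet[MeasurableSpace.comap (fun ω => (X₁ ω, A₁ ω, X₂ ω)) inferInstance] C →
          ∫ ω in C, (if A₁ ω = a₁ then (1:ℝ) else 0) *
            ((if A₂ ω = a₂ then (1:ℝ) else 0) * (if y ≤ Y ω then (1:ℝ) else 0)) ∂P
          = ∫ ω in C, (if A₁ ω = a₁ then (1:ℝ) else 0) *
            ((if A₂ ω = a₂ then (1:ℝ) else 0) * R y (X₁ ω) a₁ (X₂ ω) a₂) ∂P := by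
        rintro C ⟨B', hB', rfl⟩
        have hBsl : MeasurableSet ((fun x : (Fin p₁ → ℝ) × (Fin p₂ → ℝ) =>
            (x.1, a₁, x.2)) ⁻¹' B') :=
          (measurable_fst.prodMk (measurable_const.prodMk measurable_snd)) hB'
        have hRinst := hR y a₁ a₂ _ hBsl
        have hD : MeasurableSet {ω' | y ≤ Y ω' ∧ A₁ ω' = a₁ ∧ A₂ ω' = a₂} := by
          refine MeasurableSet.inter (measurableSet_le measurable_const hY) ?_
          exact (hA₁ (measurableSet_singleton a₁)).inter (hA₂ (measurableSet_singleton a₂))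
        have hD₂ : MeasurableSet {ω' | A₁ ω' = a₁ ∧ A₂ ω' = a₂} :=
          (hA₁ (measurableSet_singleton a₁)).inter (hA₂ (measurableSet_singleton a₂))
        have hindf : ∀ ω, (if A₁ ω = a₁ then (1:ℝ) else 0) *
            ((if A₂ ω = a₂ then (1:ℝ) else 0) * (if y ≤ Y ω then (1:ℝ) else 0))
            = Set.indicator {ω' | y ≤ Y ω' ∧ A₁ ω' = a₁ ∧ A₂ ω' = a₂} (fun _ => (1:ℝ)) ω := by
          intro ω
          by_cases h1 : A₁ ω = a₁ <;> by_cases h2 : A₂ ω = a₂ <;>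
            by_cases h3 : y ≤ Y ω <;>
            simp [Set.indicator_apply, Set.mem_setOf_eq, h1, h2, h3]
        have hindg : ∀ ω, (if A₁ ω = a₁ then (1:ℝ) else 0) *
            ((if A₂ ω = a₂ then (1:ℝ) else 0) * R y (X₁ ω) a₁ (X₂ ω) a₂)
            = Set.indicator {ω' | A₁ ω' = a₁ ∧ A₂ ω' = a₂}
                (fun ω' => R y (X₁ ω') a₁ (X₂ ω') a₂) ω := by
          intro ω
          by_cases h1 : A₁ ω = a₁ <;> by_cases h2 : A₂ ω = a₂ <;>
            simp [Set.indicator_apply, Set.mem_setOf_eq, h1, h2]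
        have hset1 : (fun ω => (X₁ ω, A₁ ω, X₂ ω)) ⁻¹' B' ∩
            {ω' | y ≤ Y ω' ∧ A₁ ω' = a₁ ∧ A₂ ω' = a₂}
            = {ω | y ≤ Y ω ∧ (X₁ ω, X₂ ω) ∈ (fun x : (Fin p₁ → ℝ) × (Fin p₂ → ℝ) =>
                (x.1, a₁, x.2)) ⁻¹' B' ∧ A₁ ω = a₁ ∧ A₂ ω = a₂} := by
          ext ω
          simp only [Set.mem_inter_iff, Set.mem_preimage, Set.mem_setOf_eq]
          constructor
          · rintro ⟨hC, h3, h1, h2⟩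
            rw [h1] at hC
            exact ⟨h3, hC, h1, h2⟩
          · rintro ⟨h3, hB, h1, h2⟩
            rw [← h1] at hB
            exact ⟨hB, h3, h1, h2⟩
        have hset2 : (fun ω => (X₁ ω, A₁ ω, X₂ ω)) ⁻¹' B' ∩ {ω' | A₁ ω' = a₁ ∧ A₂ ω' = a₂}
            = {ω | (X₁ ω, X₂ ω) ∈ (fun x : (Fin p₁ → ℝ) × (Fin p₂ → ℝ) =>
                (x.1, a₁, x.2)) ⁻¹' B' ∧ A₁ ω = a₁ ∧ A₂ ω = a₂} := by
          ext ω
          simp only [Set.mem_inter_iff, Set.mem_preimage, Set.mem_setOf_eq]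
          constructor
          · rintro ⟨hC, h1, h2⟩
            rw [h1] at hC
            exact ⟨hC, h1, h2⟩
          · rintro ⟨hB, h1, h2⟩
            rw [← h1] at hB
            exact ⟨hB, h1, h2⟩
        calc ∫ ω in (fun ω => (X₁ ω, A₁ ω, X₂ ω)) ⁻¹' B',
              (if A₁ ω = a₁ then (1:ℝ) else 0) *
                ((if A₂ ω = a₂ then (1:ℝ) else 0) * (if y ≤ Y ω then (1:ℝ) else 0)) ∂P
            = ∫ ω in (fun ω => (X₁ ω, A₁ ω, X₂ ω)) ⁻¹' B',
              Set.indicator {ω' | y ≤ Y ω' ∧ A₁ ω' = a₁ ∧ A₂ ω' = a₂} (fun _ => (1:ℝ)) ω ∂P := by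
              refine setIntegral_congr_ae (hT hB') ?_
              exact Filter.Eventually.of_forall fun ω _ => hindf ω
          _ = (P {ω | y ≤ Y ω ∧ (X₁ ω, X₂ ω) ∈ (fun x : (Fin p₁ → ℝ) × (Fin p₂ → ℝ) =>
                (x.1, a₁, x.2)) ⁻¹' B' ∧ A₁ ω = a₁ ∧ A₂ ω = a₂}).toReal := by
              rw [setIntegral_indicator hD, hset1, setIntegral_const, measureReal_def, smul_eq_mul, mul_one]
          _ = ∫ ω in {ω | (X₁ ω, X₂ ω) ∈ (fun x : (Fin p₁ → ℝ) × (Fin p₂ → ℝ) =>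
                (x.1, a₁, x.2)) ⁻¹' B' ∧ A₁ ω = a₁ ∧ A₂ ω = a₂},
                R y (X₁ ω) a₁ (X₂ ω) a₂ ∂P := hRinst
          _ = ∫ ω in (fun ω => (X₁ ω, A₁ ω, X₂ ω)) ⁻¹' B',
              Set.indicator {ω' | A₁ ω' = a₁ ∧ A₂ ω' = a₂}
                (fun ω' => R y (X₁ ω') a₁ (X₂ ω') a₂) ω ∂P := by
              rw [setIntegral_indicator hD₂, hset2]
          _ = ∫ ω in (fun ω => (X₁ ω, A₁ ω, X₂ ω)) ⁻¹' B',
              (if A₁ ω = a₁ then (1:ℝ) else 0) *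
                ((if A₂ ω = a₂ then (1:ℝ) else 0) * R y (X₁ ω) a₁ (X₂ ω) a₂) ∂P := by
              refine setIntegral_congr_ae (hT hB') ?_
              exact Filter.Eventually.of_forall fun ω _ => (hindg ω).symm
      -- the chain of equalities
      calc ∫ ω, (if π₁ (X₁ ω) = a₁ then (1:ℝ) else 0) *
            ((if π₂ (X₁ ω, a₁, X₂star a₁ ω) = a₂ then (1:ℝ) else 0) *
              (if y ≤ Ystar a₁ a₂ ω then (1:ℝ) else 0)) ∂P
          = ∫ ω, ((fun ω' => (if π₁ (X₁ ω') = a₁ then (1:ℝ) else 0) / E1 ω') ω *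
              (P⟦A₁ ⁻¹' {a₁}|MeasurableSpace.comap X₁ inferInstance⟧) ω) *
              ((fun ω' => (X₁ ω', Wfun X₂star Ystar ω')) ⁻¹' Tset).indicator
                (fun _ => (1:ℝ)) ω ∂P := by
            refine integral_congr_ae ?_
            filter_upwards [hE1ne] with ω hne0
            rw [← hVind ω]
            have : (if π₁ (X₁ ω) = a₁ then (1:ℝ) else 0) / E1 ω *
                (P⟦A₁ ⁻¹' {a₁}|MeasurableSpace.comap X₁ inferInstance⟧) ω
                = (if π₁ (X₁ ω) = a₁ then (1:ℝ) else 0) := div_mul_cancel₀ _ hne0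
            rw [this]
        _ = ∫ ω, (fun ω' => (if π₁ (X₁ ω') = a₁ then (1:ℝ) else 0) / E1 ω') ω *
              ((A₁ ⁻¹' {a₁}).indicator (fun _ => (1:ℝ)) ω *
                ((fun ω' => (X₁ ω', Wfun X₂star Ystar ω')) ⁻¹' Tset).indicator
                  (fun _ => (1:ℝ)) ω) ∂P :=
            (condindep_weight hX₁.comap_le hA₁ hVmeas hCI1 (measurableSet_singleton a₁)
              hTsetm hH1sm (1/ε) hH1bd).symm
        _ = ∫ ω, ((if π₁ (X₁ ω) = a₁ then (1:ℝ) else 0) / E1 ω) *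
              ((if A₁ ω = a₁ then (1:ℝ) else 0) *
                ((if π₂ (X₁ ω, A₁ ω, X₂ ω) = a₂ then (1:ℝ) else 0) *
                  (if y ≤ Ystar a₁ a₂ ω then (1:ℝ) else 0))) ∂P := by
            refine integral_congr_ae (Filter.Eventually.of_forall fun ω => ?_)
            beta_reduce
            rw [← hVind ω, ← hJ1ind ω]
            by_cases hA : A₁ ω = a₁
            · have hX2 : X₂star a₁ ω = X₂ ω := by rw [hC1X ω, hA]
              rw [hA, hX2]
            · simp [hA]
        _ = ∫ ω, ((fun ω' => ((if π₁ (X₁ ω') = a₁ then (1:ℝ) else 0) / E1 ω') *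
                (if A₁ ω' = a₁ then (1:ℝ) else 0) *
                (if π₂ (X₁ ω', A₁ ω', X₂ ω') = a₂ then (1:ℝ) else 0) / E2 ω') ω *
              (P⟦A₂ ⁻¹' {a₂}|MeasurableSpace.comap (fun ω' => (X₁ ω', A₁ ω', X₂ ω'))
                inferInstance⟧) ω) *
              ((Wfun X₂star Ystar) ⁻¹' TY).indicator (fun _ => (1:ℝ)) ω ∂P := by
            refine integral_congr_ae ?_
            filter_upwards [hE2ne] with ω hne0
            rw [div_mul_cancel₀ _ hne0, ← hWTY ω]
            ring
        _ = ∫ ω, (fun ω' => ((if π₁ (X₁ ω') = a₁ then (1:ℝ) else 0) / E1 ω') *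
                (if A₁ ω' = a₁ then (1:ℝ) else 0) *
                (if π₂ (X₁ ω', A₁ ω', X₂ ω') = a₂ then (1:ℝ) else 0) / E2 ω') ω *
              ((A₂ ⁻¹' {a₂}).indicator (fun _ => (1:ℝ)) ω *
                ((Wfun X₂star Ystar) ⁻¹' TY).indicator (fun _ => (1:ℝ)) ω) ∂P :=
            (condindep_weight hT.comap_le hA₂ hW hC2₂ (measurableSet_singleton a₂)
              hTYm hg2m.stronglyMeasurable ((1/ε)/ε) hg2bd).symm
        _ = ∫ ω, (((if π₁ (X₁ ω) = a₁ then (1:ℝ) else 0) / E1 ω) *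
                (if π₂ (X₁ ω, A₁ ω, X₂ ω) = a₂ then (1:ℝ) else 0) / E2 ω) *
              ((if A₁ ω = a₁ then (1:ℝ) else 0) *
                ((if A₂ ω = a₂ then (1:ℝ) else 0) * (if y ≤ Y ω then (1:ℝ) else 0))) ∂P := by
            refine integral_congr_ae (Filter.Eventually.of_forall fun ω => ?_)
            beta_reduce
            rw [← hWTY ω, ← hJ2ind ω]
            by_cases hA1 : A₁ ω = a₁
            · by_cases hA2 : A₂ ω = a₂
              · have hYeq : Ystar a₁ a₂ ω = Y ω := by rw [hC1Y ω, hA1, hA2]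
                rw [hYeq]
                ring
              · simp [hA2]
            · simp [hA1]
        _ = ∫ ω, (((if π₁ (X₁ ω) = a₁ then (1:ℝ) else 0) / E1 ω) *
                (if π₂ (X₁ ω, A₁ ω, X₂ ω) = a₂ then (1:ℝ) else 0) / E2 ω) *
              ((if A₁ ω = a₁ then (1:ℝ) else 0) *
                ((if A₂ ω = a₂ then (1:ℝ) else 0) * R y (X₁ ω) a₁ (X₂ ω) a₂)) ∂P :=
            weighted_eq_of_setIntegral_eq hT.comap_le hf_int hg_int hsets
              hh3m.stronglyMeasurable ((1/ε)/ε) hh3bd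
        _ = ∫ ω, (fun ω' => ((if π₁ (X₁ ω') = a₁ then (1:ℝ) else 0) / E1 ω') *
                ((if A₁ ω' = a₁ then (1:ℝ) else 0) *
                  ((if π₂ (X₁ ω', A₁ ω', X₂ ω') = a₂ then (1:ℝ) else 0) *
                    R y (X₁ ω') a₁ (X₂ ω') a₂)) / E2 ω') ω *
              (A₂ ⁻¹' {a₂}).indicator (fun _ => (1:ℝ)) ω ∂P := by
            refine integral_congr_ae (Filter.Eventually.of_forall fun ω => ?_)
            beta_reduce
            rw [← hJ2ind ω]
            ring
        _ = ∫ ω, (fun ω' => ((if π₁ (X₁ ω') = a₁ then (1:ℝ) else 0) / E1 ω') *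
                ((if A₁ ω' = a₁ then (1:ℝ) else 0) *
                  ((if π₂ (X₁ ω', A₁ ω', X₂ ω') = a₂ then (1:ℝ) else 0) *
                    R y (X₁ ω') a₁ (X₂ ω') a₂)) / E2 ω') ω *
              (P[(A₂ ⁻¹' {a₂}).indicator (fun _ => (1:ℝ)) |
                MeasurableSpace.comap (fun ω' => (X₁ ω', A₁ ω', X₂ ω')) inferInstance]) ω ∂P :=
            weighted_condExp hT.comap_le (integrable_ind (hA₂ (measurableSet_singleton a₂)))
              hh4m.stronglyMeasurable ((1/ε)/ε) hh4bd
        _ = ∫ ω, ((if π₁ (X₁ ω) = a₁ then (1:ℝ) else 0) / E1 ω) *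
              ((if A₁ ω = a₁ then (1:ℝ) else 0) *
                ((if π₂ (X₁ ω, A₁ ω, X₂ ω) = a₂ then (1:ℝ) else 0) *
                  R y (X₁ ω) a₁ (X₂ ω) a₂)) ∂P := by
            refine integral_congr_ae ?_
            filter_upwards [hE2ne] with ω hne0
            exact div_mul_cancel₀ _ hne0
    -- assemble over a₂
    have hE1ne : ∀ᵐ ω ∂P, E1 ω ≠ 0 := hE1bd.mono fun ω h => ne_of_gt (hεpos.trans h.1)
    have hJ1ind : ∀ ω, (if A₁ ω = a₁ then (1:ℝ) else 0)
        = (A₁ ⁻¹' {a₁}).indicator (fun _ => (1:ℝ)) ω := by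
      intro ω; by_cases h : A₁ ω = a₁ <;> simp [Set.indicator_apply, h]
    have hE1meas : Measurable E1 := (hE1sm.mono hX₁.comap_le).measurable
    have hterm2_int : ∀ a₂ : ℝ, Integrable (fun ω =>
        ((if π₁ (X₁ ω) = a₁ then (1:ℝ) else 0) / E1 ω) *
          ((if A₁ ω = a₁ then (1:ℝ) else 0) *
            ((if π₂ (X₁ ω, A₁ ω, X₂ ω) = a₂ then (1:ℝ) else 0) *
              R y (X₁ ω) a₁ (X₂ ω) a₂))) P := by
      intro a₂
      refine integrable_of_bound ?_ (1/ε) ?_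
      · refine Measurable.aestronglyMeasurable ?_
        refine ((Measurable.ite ((hπ₁.comp hX₁) (measurableSet_singleton a₁))
          measurable_const measurable_const).div hE1meas).mul ?_
        refine (Measurable.ite (hA₁ (measurableSet_singleton a₁)) measurable_const
          measurable_const).mul ?_
        exact (Measurable.ite ((hπ₂.comp hT) (measurableSet_singleton a₂)) measurable_const
          measurable_const).mul ((hR_meas y a₁ a₂).comp (hX₁.prodMk hX₂))
      · filter_upwards [hH1bd] with ω h1
        have hr01 := hR_mem y (X₁ ω) a₁ (X₂ ω) a₂
        have hb : |(if A₁ ω = a₁ then (1:ℝ) else 0) *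
            ((if π₂ (X₁ ω, A₁ ω, X₂ ω) = a₂ then (1:ℝ) else 0) *
              R y (X₁ ω) a₁ (X₂ ω) a₂)| ≤ 1 := by
          rw [abs_mul, abs_mul]
          have h01 : |R y (X₁ ω) a₁ (X₂ ω) a₂| ≤ 1 := by
            rw [abs_le]; exact ⟨by linarith [hr01.1], hr01.2⟩
          have hb1 : |(if A₁ ω = a₁ then (1:ℝ) else 0)| ≤ 1 := by split_ifs <;> norm_num
          have hb2 : |(if π₂ (X₁ ω, A₁ ω, X₂ ω) = a₂ then (1:ℝ) else 0)| ≤ 1 := by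
            split_ifs <;> norm_num
          calc |(if A₁ ω = a₁ then (1:ℝ) else 0)| *
                (|(if π₂ (X₁ ω, A₁ ω, X₂ ω) = a₂ then (1:ℝ) else 0)| *
                  |R y (X₁ ω) a₁ (X₂ ω) a₂|)
              ≤ 1 * (1 * 1) := mul_le_mul hb1 (mul_le_mul hb2 h01 (abs_nonneg _) zero_le_one)
                (by positivity) zero_le_one
            _ = 1 := by ring
        rw [abs_mul]
        calc |(if π₁ (X₁ ω) = a₁ then (1:ℝ) else 0) / E1 ω| * |(if A₁ ω = a₁ then (1:ℝ) else 0) *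
              ((if π₂ (X₁ ω, A₁ ω, X₂ ω) = a₂ then (1:ℝ) else 0) *
                R y (X₁ ω) a₁ (X₂ ω) a₂)|
            ≤ (1/ε) * 1 := mul_le_mul h1 hb (abs_nonneg _) (le_of_lt hεinv)
          _ = 1/ε := mul_one _
    have hJκ_int : Integrable (fun ω => (if A₁ ω = a₁ then (1:ℝ) else 0) *
        (∑ a₂ ∈ ({-1, 1} : Finset ℝ), (if π₂ (X₁ ω, A₁ ω, X₂ ω) = a₂ then (1:ℝ) else 0) *
          R y (X₁ ω) a₁ (X₂ ω) a₂)) P := by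
      refine integrable_of_bound ?_ 1 (Filter.Eventually.of_forall fun ω => ?_)
      · exact ((Measurable.ite (hA₁ (measurableSet_singleton a₁)) measurable_const
          measurable_const).mul (hκmeas a₁)).aestronglyMeasurable
      · rcases hκbd a₁ ω with ⟨h0, h1⟩
        rw [abs_mul]
        have hb1 : |(if A₁ ω = a₁ then (1:ℝ) else 0)| ≤ 1 := by split_ifs <;> norm_num
        have hb2 : |∑ a₂ ∈ ({-1, 1} : Finset ℝ),
            (if π₂ (X₁ ω, A₁ ω, X₂ ω) = a₂ then (1:ℝ) else 0) *
              R y (X₁ ω) a₁ (X₂ ω) a₂| ≤ 1 := by rw [abs_le]; exact ⟨by linarith, h1⟩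
        calc _ ≤ 1 * 1 := mul_le_mul hb1 hb2 (abs_nonneg _) zero_le_one
          _ = (1:ℝ) := one_mul 1
    have hJρ_int : Integrable (fun ω => (if A₁ ω = a₁ then (1:ℝ) else 0) *
        ρ a₁ (X₁ ω)) P := by
      refine integrable_of_bound ?_ 1 ?_
      · exact ((Measurable.ite (hA₁ (measurableSet_singleton a₁)) measurable_const
          measurable_const).mul ((hρ_meas a₁ ha₁).comp hX₁)).aestronglyMeasurable
      · filter_upwards [hρbd a₁ ha₁] with ω hω
        rw [abs_mul]
        have hb1 : |(if A₁ ω = a₁ then (1:ℝ) else 0)| ≤ 1 := by split_ifs <;> norm_num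
        have hb2 : |ρ a₁ (X₁ ω)| ≤ 1 := by rw [abs_le]; exact ⟨by linarith [hω.1], hω.2⟩
        calc _ ≤ 1 * 1 := mul_le_mul hb1 hb2 (abs_nonneg _) zero_le_one
          _ = (1:ℝ) := one_mul 1
    have hsetsρ : ∀ C : Set Ω, MeasurableSet[MeasurableSpace.comap X₁ inferInstance] C →
        ∫ ω in C, (if A₁ ω = a₁ then (1:ℝ) else 0) *
          (∑ a₂ ∈ ({-1, 1} : Finset ℝ), (if π₂ (X₁ ω, A₁ ω, X₂ ω) = a₂ then (1:ℝ) else 0) *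
            R y (X₁ ω) a₁ (X₂ ω) a₂) ∂P
        = ∫ ω in C, (if A₁ ω = a₁ then (1:ℝ) else 0) * ρ a₁ (X₁ ω) ∂P := by
      rintro C ⟨B, hB, rfl⟩
      have hA1s : MeasurableSet {ω' | A₁ ω' = a₁} := hA₁ (measurableSet_singleton a₁)
      have hseteq : X₁ ⁻¹' B ∩ {ω' | A₁ ω' = a₁} = {ω | X₁ ω ∈ B ∧ A₁ ω = a₁} := by
        ext ω; simp [Set.mem_setOf_eq]
      have hindκ : ∀ ω, (if A₁ ω = a₁ then (1:ℝ) else 0) *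
          (∑ a₂ ∈ ({-1, 1} : Finset ℝ), (if π₂ (X₁ ω, A₁ ω, X₂ ω) = a₂ then (1:ℝ) else 0) *
            R y (X₁ ω) a₁ (X₂ ω) a₂)
          = Set.indicator {ω' | A₁ ω' = a₁} (fun ω' => ∑ a₂ ∈ ({-1, 1} : Finset ℝ),
              (if π₂ (X₁ ω', A₁ ω', X₂ ω') = a₂ then (1:ℝ) else 0) *
                R y (X₁ ω') a₁ (X₂ ω') a₂) ω := by
        intro ω
        by_cases h : A₁ ω = a₁ <;> simp [Set.indicator_apply, Set.mem_setOf_eq, h]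
      have hindρ : ∀ ω, (if A₁ ω = a₁ then (1:ℝ) else 0) * ρ a₁ (X₁ ω)
          = Set.indicator {ω' | A₁ ω' = a₁} (fun ω' => ρ a₁ (X₁ ω')) ω := by
        intro ω
        by_cases h : A₁ ω = a₁ <;> simp [Set.indicator_apply, Set.mem_setOf_eq, h]
      calc ∫ ω in X₁ ⁻¹' B, (if A₁ ω = a₁ then (1:ℝ) else 0) *
            (∑ a₂ ∈ ({-1, 1} : Finset ℝ), (if π₂ (X₁ ω, A₁ ω, X₂ ω) = a₂ then (1:ℝ) else 0) *
              R y (X₁ ω) a₁ (X₂ ω) a₂) ∂P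
          = ∫ ω in X₁ ⁻¹' B, Set.indicator {ω' | A₁ ω' = a₁}
              (fun ω' => ∑ a₂ ∈ ({-1, 1} : Finset ℝ),
                (if π₂ (X₁ ω', A₁ ω', X₂ ω') = a₂ then (1:ℝ) else 0) *
                  R y (X₁ ω') a₁ (X₂ ω') a₂) ω ∂P :=
            setIntegral_congr_ae (hX₁ hB)
              (Filter.Eventually.of_forall fun ω _ => hindκ ω)
        _ = ∫ ω in {ω | X₁ ω ∈ B ∧ A₁ ω = a₁}, ∑ a₂ ∈ ({-1, 1} : Finset ℝ),
              (if π₂ (X₁ ω, A₁ ω, X₂ ω) = a₂ then (1:ℝ) else 0) *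
                R y (X₁ ω) a₁ (X₂ ω) a₂ ∂P := by
            rw [setIntegral_indicator hA1s, hseteq]
        _ = ∫ ω in {ω | X₁ ω ∈ B ∧ A₁ ω = a₁}, ρ a₁ (X₁ ω) ∂P := hρ a₁ ha₁ B hB
        _ = ∫ ω in X₁ ⁻¹' B, Set.indicator {ω' | A₁ ω' = a₁} (fun ω' => ρ a₁ (X₁ ω')) ω ∂P := by
            rw [setIntegral_indicator hA1s, hseteq]
        _ = ∫ ω in X₁ ⁻¹' B, (if A₁ ω = a₁ then (1:ℝ) else 0) * ρ a₁ (X₁ ω) ∂P :=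
            setIntegral_congr_ae (hX₁ hB)
              (Filter.Eventually.of_forall fun ω _ => (hindρ ω).symm)
    have hfinsm : StronglyMeasurable[MeasurableSpace.comap X₁ inferInstance]
        (fun ω => (if π₁ (X₁ ω) = a₁ then (1:ℝ) else 0) * ρ a₁ (X₁ ω) / E1 ω) :=
      ((hI1m.mul ((hρ_meas a₁ ha₁).comp hX₁m)).div hE1sm.measurable).stronglyMeasurable
    have hfinbd : ∀ᵐ ω ∂P, |(if π₁ (X₁ ω) = a₁ then (1:ℝ) else 0) * ρ a₁ (X₁ ω) / E1 ω|
        ≤ 1/ε := by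
      filter_upwards [hE1bd, hρbd a₁ ha₁] with ω h1 h2
      refine abs_div_le' ?_ hεpos h1.1
      rw [abs_mul]
      have hb1 : |(if π₁ (X₁ ω) = a₁ then (1:ℝ) else 0)| ≤ 1 := by split_ifs <;> norm_num
      have hb2 : |ρ a₁ (X₁ ω)| ≤ 1 := by rw [abs_le]; exact ⟨by linarith [h2.1], h2.2⟩
      calc _ ≤ 1 * 1 := mul_le_mul hb1 hb2 (abs_nonneg _) zero_le_one
        _ = (1:ℝ) := one_mul 1
    calc ∑ a₂ ∈ ({-1, 1} : Finset ℝ), ∫ ω, (if π₁ (X₁ ω) = a₁ then (1:ℝ) else 0) *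
          ((if π₂ (X₁ ω, a₁, X₂star a₁ ω) = a₂ then (1:ℝ) else 0) *
            (if y ≤ Ystar a₁ a₂ ω then (1:ℝ) else 0)) ∂P
        = ∑ a₂ ∈ ({-1, 1} : Finset ℝ), ∫ ω, ((if π₁ (X₁ ω) = a₁ then (1:ℝ) else 0) / E1 ω) *
            ((if A₁ ω = a₁ then (1:ℝ) else 0) *
              ((if π₂ (X₁ ω, A₁ ω, X₂ ω) = a₂ then (1:ℝ) else 0) *
                R y (X₁ ω) a₁ (X₂ ω) a₂)) ∂P := Finset.sum_congr rfl chain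
      _ = ∫ ω, ∑ a₂ ∈ ({-1, 1} : Finset ℝ), ((if π₁ (X₁ ω) = a₁ then (1:ℝ) else 0) / E1 ω) *
            ((if A₁ ω = a₁ then (1:ℝ) else 0) *
              ((if π₂ (X₁ ω, A₁ ω, X₂ ω) = a₂ then (1:ℝ) else 0) *
                R y (X₁ ω) a₁ (X₂ ω) a₂)) ∂P :=
          (integral_finset_sum _ (fun a₂ _ => hterm2_int a₂)).symm
      _ = ∫ ω, ((if π₁ (X₁ ω) = a₁ then (1:ℝ) else 0) / E1 ω) *
            ((if A₁ ω = a₁ then (1:ℝ) else 0) *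
              (∑ a₂ ∈ ({-1, 1} : Finset ℝ), (if π₂ (X₁ ω, A₁ ω, X₂ ω) = a₂ then (1:ℝ) else 0) *
                R y (X₁ ω) a₁ (X₂ ω) a₂)) ∂P := by
          refine integral_congr_ae (Filter.Eventually.of_forall fun ω => ?_)
          beta_reduce
          rw [Finset.mul_sum, Finset.mul_sum]
      _ = ∫ ω, ((if π₁ (X₁ ω) = a₁ then (1:ℝ) else 0) / E1 ω) *
            ((if A₁ ω = a₁ then (1:ℝ) else 0) * ρ a₁ (X₁ ω)) ∂P :=
          weighted_eq_of_setIntegral_eq hX₁.comap_le hJκ_int hJρ_int hsetsρ hH1sm (1/ε) hH1bd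
      _ = ∫ ω, (fun ω' => (if π₁ (X₁ ω') = a₁ then (1:ℝ) else 0) * ρ a₁ (X₁ ω') / E1 ω') ω *
            (A₁ ⁻¹' {a₁}).indicator (fun _ => (1:ℝ)) ω ∂P := by
          refine integral_congr_ae (Filter.Eventually.of_forall fun ω => ?_)
          beta_reduce
          rw [← hJ1ind ω]
          ring
      _ = ∫ ω, (fun ω' => (if π₁ (X₁ ω') = a₁ then (1:ℝ) else 0) * ρ a₁ (X₁ ω') / E1 ω') ω *
            (P[(A₁ ⁻¹' {a₁}).indicator (fun _ => (1:ℝ)) |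
              MeasurableSpace.comap X₁ inferInstance]) ω ∂P :=
          weighted_condExp hX₁.comap_le (integrable_ind (hA₁ (measurableSet_singleton a₁)))
            hfinsm (1/ε) hfinbd
      _ = ∫ ω, (if π₁ (X₁ ω) = a₁ then (1:ℝ) else 0) * ρ a₁ (X₁ ω) ∂P := by
          refine integral_congr_ae ?_
          filter_upwards [hE1ne] with ω hne0
          beta_reduce
          exact div_mul_cancel₀ _ hne0
  have hρint : ∀ a₁ ∈ ({-1, 1} : Finset ℝ), Integrable
      (fun ω => (if π₁ (X₁ ω) = a₁ then (1:ℝ) else 0) * ρ a₁ (X₁ ω)) P := by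
    intro a₁ ha₁
    have ha₁' : a₁ ∈ ({-1, 1} : Set ℝ) := by simpa using (by simpa using ha₁ : a₁ = -1 ∨ a₁ = 1)
    refine integrable_of_bound ?_ 1 ?_
    · refine Measurable.aestronglyMeasurable (Measurable.mul
        (Measurable.ite ((hπ₁.comp hX₁) (measurableSet_singleton a₁))
          measurable_const measurable_const) ((hρ_meas a₁ ha₁').comp hX₁))
    · filter_upwards [hρbd a₁ ha₁'] with ω hω
      rcases hω with ⟨h0, h1⟩
      split_ifs <;> simp [abs_le] <;> constructor <;> linarith
  calc (P {ω | y ≤ Ypi X₁ X₂star Ystar π₁ π₂ ω}).toReal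
      = ∫ ω, Set.indicator {ω' | y ≤ Ypi X₁ X₂star Ystar π₁ π₂ ω'} (1 : Ω → ℝ) ω ∂P :=
        (integral_indicator_one hsetYpi).symm
    _ = ∫ ω, ∑ a₁ ∈ ({-1, 1} : Finset ℝ), ∑ a₂ ∈ ({-1, 1} : Finset ℝ),
          (if π₁ (X₁ ω) = a₁ then (1:ℝ) else 0) *
            ((if π₂ (X₁ ω, a₁, X₂star a₁ ω) = a₂ then (1:ℝ) else 0) *
              (if y ≤ Ystar a₁ a₂ ω then (1:ℝ) else 0)) ∂P :=
        integral_congr_ae (Filter.Eventually.of_forall hpointwise)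
    _ = ∑ a₁ ∈ ({-1, 1} : Finset ℝ), ∑ a₂ ∈ ({-1, 1} : Finset ℝ), ∫ ω,
          (if π₁ (X₁ ω) = a₁ then (1:ℝ) else 0) *
            ((if π₂ (X₁ ω, a₁, X₂star a₁ ω) = a₂ then (1:ℝ) else 0) *
              (if y ≤ Ystar a₁ a₂ ω then (1:ℝ) else 0)) ∂P := by
        rw [integral_finset_sum _ (fun a₁ _ => integrable_finset_sum _
          (fun a₂ _ => hterm_int a₁ a₂))]
        exact Finset.sum_congr rfl fun a₁ _ =>
          integral_finset_sum _ (fun a₂ _ => hterm_int a₁ a₂)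
    _ = ∑ a₁ ∈ ({-1, 1} : Finset ℝ), ∫ ω,
          (if π₁ (X₁ ω) = a₁ then (1:ℝ) else 0) * ρ a₁ (X₁ ω) ∂P :=
        Finset.sum_congr rfl main
    _ = ∫ ω, (∑ a₁ ∈ ({-1, 1} : Finset ℝ),
          (if π₁ (X₁ ω) = a₁ then (1:ℝ) else 0) * ρ a₁ (X₁ ω)) ∂P :=
        (integral_finset_sum _ hρint).symm
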